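/- Let α be a primary Lipschitz quaternion and ε a unit of the Hurwitz order 𝔼. Then εα ∈ 𝕃 (equivalently αε ∈ 𝕃) if and only if ε ∈ {±1, ±i, ±j, ±k}. -/

import Mathlib

open scoped Quaternion

/-- Build a rational quaternion from four rationals. -/
def mkQ (a b c d : ℚ) : ℍ[ℚ] := ⟨a, b, c, d⟩

/-- A rational quaternion is a Lipschitz quaternion if all its coefficients are
integers. -/
def IsLipschitz (α : ℍ[ℚ]) : Prop :=
  ∃ a b c d : ℤ, α = mkQ a b c d

/-- A rational quaternion is a Hurwitz quaternion if its coefficients are all in ℤ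
or all in ℤ + 1/2, i.e. 2α has integer coefficients of equal parity. -/
def IsHurwitz (α : ℍ[ℚ]) : Prop :=
  ∃ a b c d : ℤ, (2 : ℚ) • α = mkQ a b c d ∧
    a % 2 = b % 2 ∧ b % 2 = c % 2 ∧ c % 2 = d % 2

/-- A unit of the Hurwitz order: a Hurwitz quaternion of norm 1. -/
def IsHurwitzUnit (ε : ℍ[ℚ]) : Prop :=
  IsHurwitz ε ∧ Quaternion.normSq ε = 1

/-- A primary (Lipschitz) quaternion: a₁ odd, the other coefficients even, and the
sum of the coefficients ≡ 1 (mod 4). -/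
def Primary (α : ℍ[ℚ]) : Prop :=
  ∃ a b c d : ℤ, α = mkQ a b c d ∧ Odd a ∧ Even b ∧ Even c ∧ Even d ∧
    (a + b + c + d) % 4 = 1

@[simp] lemma mkQ_re (a b c d : ℚ) : (mkQ a b c d).re = a := rfl
@[simp] lemma mkQ_imI (a b c d : ℚ) : (mkQ a b c d).imI = b := rfl
@[simp] lemma mkQ_imJ (a b c d : ℚ) : (mkQ a b c d).imJ = c := rfl
@[simp] lemma mkQ_imK (a b c d : ℚ) : (mkQ a b c d).imK = d := rfl

lemma mkQ_mul (a b c d e f g h : ℚ) :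
    mkQ a b c d * mkQ e f g h =
      mkQ (a*e - b*f - c*g - d*h) (a*f + b*e + c*h - d*g)
        (a*g - b*h + c*e + d*f) (a*h + b*g - c*f + d*e) := by
  ext <;> simp [Quaternion.re_mul, Quaternion.imI_mul, Quaternion.imJ_mul,
    Quaternion.imK_mul]

lemma mkQ_inj {a b c d e f g h : ℚ} (h' : mkQ a b c d = mkQ e f g h) :
    a = e ∧ b = f ∧ c = g ∧ d = h := by
  simpa using Quaternion.ext_iff.mp h'

lemma smul_mkQ (r a b c d : ℚ) : r • mkQ a b c d = mkQ (r*a) (r*b) (r*c) (r*d) := by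
  ext <;> simp

lemma normSq_mkQ (a b c d : ℚ) :
    Quaternion.normSq (mkQ a b c d) = a^2+b^2+c^2+d^2 := by
  simp [Quaternion.normSq_def']

lemma lip_mul {x y : ℍ[ℚ]} (hx : IsLipschitz x) (hy : IsLipschitz y) :
    IsLipschitz (x*y) := by
  obtain ⟨a,b,c,d,rfl⟩ := hx; obtain ⟨e,f,g,h,rfl⟩ := hy
  exact ⟨a*e - b*f - c*g - d*h, a*f + b*e + c*h - d*g, a*g - b*h + c*e + d*f,
    a*h + b*g - c*f + d*e, by rw [mkQ_mul]; push_cast; rfl⟩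

lemma enum (e1 e2 e3 e4 : ℤ) (hn : e1*e1+e2*e2+e3*e3+e4*e4 = 4)
    (p1 : e1 % 2 = e2 % 2) (p2 : e2 % 2 = e3 % 2) (p3 : e3 % 2 = e4 % 2) :
    ((e1 = 2 ∨ e1 = -2) ∧ e2 = 0 ∧ e3 = 0 ∧ e4 = 0) ∨
    (e1 = 0 ∧ (e2 = 2 ∨ e2 = -2) ∧ e3 = 0 ∧ e4 = 0) ∨
    (e1 = 0 ∧ e2 = 0 ∧ (e3 = 2 ∨ e3 = -2) ∧ e4 = 0) ∨
    (e1 = 0 ∧ e2 = 0 ∧ e3 = 0 ∧ (e4 = 2 ∨ e4 = -2)) ∨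
    (e1 % 2 = 1 ∧ e2 % 2 = 1 ∧ e3 % 2 = 1 ∧ e4 % 2 = 1) := by
  rcases Int.even_or_odd e1 with he | he
  · have c1 : e1 = -2 ∨ e1 = 0 ∨ e1 = 2 := by
      have h1 : e1*e1 ≤ 4 := by nlinarith [sq_nonneg e2, sq_nonneg e3, sq_nonneg e4]
      have h2 : -2 ≤ e1 ∧ e1 ≤ 2 := by constructor <;> nlinarith
      obtain ⟨k, hk⟩ := he; omega
    have c2 : e2 = -2 ∨ e2 = 0 ∨ e2 = 2 := by
      have h1 : e2*e2 ≤ 4 := by nlinarith [sq_nonneg e1, sq_nonneg e3, sq_nonneg e4]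
      have h2 : -2 ≤ e2 ∧ e2 ≤ 2 := by constructor <;> nlinarith
      obtain ⟨k, hk⟩ := he; omega
    have c3 : e3 = -2 ∨ e3 = 0 ∨ e3 = 2 := by
      have h1 : e3*e3 ≤ 4 := by nlinarith [sq_nonneg e2, sq_nonneg e1, sq_nonneg e4]
      have h2 : -2 ≤ e3 ∧ e3 ≤ 2 := by constructor <;> nlinarith
      obtain ⟨k, hk⟩ := he; omega
    have c4 : e4 = -2 ∨ e4 = 0 ∨ e4 = 2 := by
      have h1 : e4*e4 ≤ 4 := by nlinarith [sq_nonneg e2, sq_nonneg e3, sq_nonneg e1]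
      have h2 : -2 ≤ e4 ∧ e4 ≤ 2 := by constructor <;> nlinarith
      obtain ⟨k, hk⟩ := he; omega
    rcases c1 with h1|h1|h1 <;> rcases c2 with h2|h2|h2 <;> rcases c3 with h3|h3|h3 <;>
      rcases c4 with h4|h4|h4 <;> subst h1 <;> subst h2 <;> subst h3 <;> subst h4 <;> omega
  · obtain ⟨k, hk⟩ := he; omega

lemma set_lip {ε : ℍ[ℚ]}
    (h : ε ∈ ({mkQ 1 0 0 0, mkQ (-1) 0 0 0, mkQ 0 1 0 0, mkQ 0 (-1) 0 0,
          mkQ 0 0 1 0, mkQ 0 0 (-1) 0, mkQ 0 0 0 1, mkQ 0 0 0 (-1)} : Set ℍ[ℚ])) :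
    IsLipschitz ε := by
  rcases h with h|h|h|h|h|h|h|h
  exacts [⟨1,0,0,0, by rw [h]; push_cast; rfl⟩, ⟨-1,0,0,0, by rw [h]; push_cast; rfl⟩,
    ⟨0,1,0,0, by rw [h]; push_cast; rfl⟩, ⟨0,-1,0,0, by rw [h]; push_cast; rfl⟩,
    ⟨0,0,1,0, by rw [h]; push_cast; rfl⟩, ⟨0,0,-1,0, by rw [h]; push_cast; rfl⟩,
    ⟨0,0,0,1, by rw [h]; push_cast; rfl⟩, ⟨0,0,0,-1, by rw [h]; push_cast; rfl⟩]

/-- for primary α and a Hurwitz unit ε, εα (equivalently αε) is a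
Lipschitz quaternion iff ε ∈ {±1, ±i, ±j, ±k}. -/
theorem primary_mul_unit_lipschitz (α ε : ℍ[ℚ]) (hα : Primary α)
    (hε : IsHurwitzUnit ε) :
    (IsLipschitz (ε * α) ↔
        ε ∈ ({mkQ 1 0 0 0, mkQ (-1) 0 0 0, mkQ 0 1 0 0, mkQ 0 (-1) 0 0,
          mkQ 0 0 1 0, mkQ 0 0 (-1) 0, mkQ 0 0 0 1, mkQ 0 0 0 (-1)} : Set ℍ[ℚ])) ∧
      (IsLipschitz (ε * α) ↔ IsLipschitz (α * ε)) := by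
  obtain ⟨a,b,c,d,hαe,ha,hb,hc,hd,-⟩ := hα
  obtain ⟨⟨e1,e2,e3,e4,h2ε,p1,p2,p3⟩, hnorm⟩ := hε
  have hαl : IsLipschitz α := ⟨a,b,c,d,hαe⟩
  have hεe : ε = mkQ ((e1:ℚ)/2) ((e2:ℚ)/2) ((e3:ℚ)/2) ((e4:ℚ)/2) := by
    rw [show ε = (2:ℚ)⁻¹ • ((2:ℚ) • ε) by rw [smul_smul]; norm_num, h2ε, smul_mkQ]
    ext <;> simp [mkQ] <;> ring
  rw [hεe, normSq_mkQ] at hnorm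
  have hn4 : e1*e1+e2*e2+e3*e3+e4*e4 = 4 := by
    have h4 : ((e1*e1+e2*e2+e3*e3+e4*e4 : ℤ) : ℚ) = ((4:ℤ) : ℚ) := by
      push_cast; nlinarith [hnorm]
    exact_mod_cast h4
  rcases enum e1 e2 e3 e4 hn4 p1 p2 p3 with
    ⟨h1,h2,h3,h4⟩|⟨h1,h2,h3,h4⟩|⟨h1,h2,h3,h4⟩|⟨h1,h2,h3,h4⟩|⟨o1,o2,o3,o4⟩
  · subst h2; subst h3; subst h4
    rcases h1 with h1|h1 <;> subst h1
    · have hεc : ε = mkQ 1 0 0 0 := by rw [hεe]; push_cast; norm_num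
      have hεl : IsLipschitz ε := ⟨1,0,0,0, by rw [hεc]; push_cast; rfl⟩
      have hm : ε ∈ ({mkQ 1 0 0 0, mkQ (-1) 0 0 0, mkQ 0 1 0 0, mkQ 0 (-1) 0 0,
          mkQ 0 0 1 0, mkQ 0 0 (-1) 0, mkQ 0 0 0 1, mkQ 0 0 0 (-1)} : Set ℍ[ℚ]) := by rw [hεc]; simp
      exact ⟨iff_of_true (lip_mul hεl hαl) hm,
        iff_of_true (lip_mul hεl hαl) (lip_mul hαl hεl)⟩
    · have hεc : ε = mkQ (-1) 0 0 0 := by rw [hεe]; push_cast; norm_num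
      have hεl : IsLipschitz ε := ⟨-1,0,0,0, by rw [hεc]; push_cast; rfl⟩
      have hm : ε ∈ ({mkQ 1 0 0 0, mkQ (-1) 0 0 0, mkQ 0 1 0 0, mkQ 0 (-1) 0 0,
          mkQ 0 0 1 0, mkQ 0 0 (-1) 0, mkQ 0 0 0 1, mkQ 0 0 0 (-1)} : Set ℍ[ℚ]) := by rw [hεc]; simp
      exact ⟨iff_of_true (lip_mul hεl hαl) hm,
        iff_of_true (lip_mul hεl hαl) (lip_mul hαl hεl)⟩
  · subst h1; subst h3; subst h4
    rcases h2 with h2|h2 <;> subst h2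
    · have hεc : ε = mkQ 0 1 0 0 := by rw [hεe]; push_cast; norm_num
      have hεl : IsLipschitz ε := ⟨0,1,0,0, by rw [hεc]; push_cast; rfl⟩
      have hm : ε ∈ ({mkQ 1 0 0 0, mkQ (-1) 0 0 0, mkQ 0 1 0 0, mkQ 0 (-1) 0 0,
          mkQ 0 0 1 0, mkQ 0 0 (-1) 0, mkQ 0 0 0 1, mkQ 0 0 0 (-1)} : Set ℍ[ℚ]) := by rw [hεc]; simp
      exact ⟨iff_of_true (lip_mul hεl hαl) hm,
        iff_of_true (lip_mul hεl hαl) (lip_mul hαl hεl)⟩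
    · have hεc : ε = mkQ 0 (-1) 0 0 := by rw [hεe]; push_cast; norm_num
      have hεl : IsLipschitz ε := ⟨0,-1,0,0, by rw [hεc]; push_cast; rfl⟩
      have hm : ε ∈ ({mkQ 1 0 0 0, mkQ (-1) 0 0 0, mkQ 0 1 0 0, mkQ 0 (-1) 0 0,
          mkQ 0 0 1 0, mkQ 0 0 (-1) 0, mkQ 0 0 0 1, mkQ 0 0 0 (-1)} : Set ℍ[ℚ]) := by rw [hεc]; simp
      exact ⟨iff_of_true (lip_mul hεl hαl) hm,
        iff_of_true (lip_mul hεl hαl) (lip_mul hαl hεl)⟩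
  · subst h1; subst h2; subst h4
    rcases h3 with h3|h3 <;> subst h3
    · have hεc : ε = mkQ 0 0 1 0 := by rw [hεe]; push_cast; norm_num
      have hεl : IsLipschitz ε := ⟨0,0,1,0, by rw [hεc]; push_cast; rfl⟩
      have hm : ε ∈ ({mkQ 1 0 0 0, mkQ (-1) 0 0 0, mkQ 0 1 0 0, mkQ 0 (-1) 0 0,
          mkQ 0 0 1 0, mkQ 0 0 (-1) 0, mkQ 0 0 0 1, mkQ 0 0 0 (-1)} : Set ℍ[ℚ]) := by rw [hεc]; simp
      exact ⟨iff_of_true (lip_mul hεl hαl) hm,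
        iff_of_true (lip_mul hεl hαl) (lip_mul hαl hεl)⟩
    · have hεc : ε = mkQ 0 0 (-1) 0 := by rw [hεe]; push_cast; norm_num
      have hεl : IsLipschitz ε := ⟨0,0,-1,0, by rw [hεc]; push_cast; rfl⟩
      have hm : ε ∈ ({mkQ 1 0 0 0, mkQ (-1) 0 0 0, mkQ 0 1 0 0, mkQ 0 (-1) 0 0,
          mkQ 0 0 1 0, mkQ 0 0 (-1) 0, mkQ 0 0 0 1, mkQ 0 0 0 (-1)} : Set ℍ[ℚ]) := by rw [hεc]; simp
      exact ⟨iff_of_true (lip_mul hεl hαl) hm,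
        iff_of_true (lip_mul hεl hαl) (lip_mul hαl hεl)⟩
  · subst h1; subst h2; subst h3
    rcases h4 with h4|h4 <;> subst h4
    · have hεc : ε = mkQ 0 0 0 1 := by rw [hεe]; push_cast; norm_num
      have hεl : IsLipschitz ε := ⟨0,0,0,1, by rw [hεc]; push_cast; rfl⟩
      have hm : ε ∈ ({mkQ 1 0 0 0, mkQ (-1) 0 0 0, mkQ 0 1 0 0, mkQ 0 (-1) 0 0,
          mkQ 0 0 1 0, mkQ 0 0 (-1) 0, mkQ 0 0 0 1, mkQ 0 0 0 (-1)} : Set ℍ[ℚ]) := by rw [hεc]; simp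
      exact ⟨iff_of_true (lip_mul hεl hαl) hm,
        iff_of_true (lip_mul hεl hαl) (lip_mul hαl hεl)⟩
    · have hεc : ε = mkQ 0 0 0 (-1) := by rw [hεe]; push_cast; norm_num
      have hεl : IsLipschitz ε := ⟨0,0,0,-1, by rw [hεc]; push_cast; rfl⟩
      have hm : ε ∈ ({mkQ 1 0 0 0, mkQ (-1) 0 0 0, mkQ 0 1 0 0, mkQ 0 (-1) 0 0,
          mkQ 0 0 1 0, mkQ 0 0 (-1) 0, mkQ 0 0 0 1, mkQ 0 0 0 (-1)} : Set ℍ[ℚ]) := by rw [hεc]; simp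
      exact ⟨iff_of_true (lip_mul hεl hαl) hm,
        iff_of_true (lip_mul hεl hαl) (lip_mul hαl hεl)⟩
  · have ho1 : Odd e1 := Int.odd_iff.mpr o1
    have ho2 : Odd e2 := Int.odd_iff.mpr o2
    have ho3 : Odd e3 := Int.odd_iff.mpr o3
    have ho4 : Odd e4 := Int.odd_iff.mpr o4
    have hodd : Odd (e1*a - e2*b - e3*c - e4*d) :=
      (((ho1.mul ha).sub_even (hb.mul_left e2)).sub_even (hc.mul_left e3)).sub_even
        (hd.mul_left e4)
    have hnotl : ¬ IsLipschitz (ε * α) := by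
      rintro ⟨n1,n2,n3,n4,h'⟩
      rw [hεe, hαe, mkQ_mul] at h'
      obtain ⟨q1, -, -, -⟩ := mkQ_inj h'
      have hq : ((e1*a - e2*b - e3*c - e4*d : ℤ) : ℚ) = ((2*n1 : ℤ) : ℚ) := by
        push_cast; linarith
      have hz : e1*a - e2*b - e3*c - e4*d = 2*n1 := by exact_mod_cast hq
      obtain ⟨m, hm⟩ := hodd; omega
    have hnotr : ¬ IsLipschitz (α * ε) := by
      rintro ⟨n1,n2,n3,n4,h'⟩
      rw [hεe, hαe, mkQ_mul] at h'
      obtain ⟨q1, -, -, -⟩ := mkQ_inj h'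
      have hq : ((e1*a - e2*b - e3*c - e4*d : ℤ) : ℚ) = ((2*n1 : ℤ) : ℚ) := by
        push_cast; linarith
      have hz : e1*a - e2*b - e3*c - e4*d = 2*n1 := by exact_mod_cast hq
      obtain ⟨m, hm⟩ := hodd; omega
    have hεnl : ¬ IsLipschitz ε := by
      rintro ⟨n1,n2,n3,n4,h'⟩
      obtain ⟨q1,-,-,-⟩ := mkQ_inj (hεe.symm.trans h')
      have h2 : (e1:ℚ) = ((2*n1 : ℤ) : ℚ) := by push_cast; linarith
      have hz : e1 = 2*n1 := by exact_mod_cast h2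
      omega
    exact ⟨iff_of_false hnotl (fun hm => hεnl (set_lip hm)), iff_of_false hnotl hnotr⟩
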